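/- arXiv:2508.08844 — 5 statements merged into one kernel-verified Lean document; each statement's English description precedes it below -/
import Mathlib

section
/- Let $B(s) = K(s-z_1)(s-z_2)$ with $K=1$ and $z_{1,2} = u \pm iv$ where $u \ge 0$ and $v \ne 0$, and let $n \ge 3$ be an integer. Then the real polynomial $\tilde B(s) = \frac{s^2}{(n-3)!} - \frac{2u\,s}{(n-2)!} + \frac{u^2+v^2}{(n-1)!}$ has no real non-negative root if and only if $u/|v| < \sqrt{n-2}$. -/
theorem stmt_0 (u v : ℝ) (hu : 0 ≤ u) (hv : v ≠ 0) (n : ℕ) (hn : 3 ≤ n) :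
    (∀ s : ℝ, 0 ≤ s →
      s ^ 2 / (Nat.factorial (n - 3) : ℝ) - 2 * u * s / (Nat.factorial (n - 2) : ℝ)
        + (u ^ 2 + v ^ 2) / (Nat.factorial (n - 1) : ℝ) ≠ 0)
      ↔ u / |v| < Real.sqrt ((n : ℝ) - 2) := by
  obtain ⟨m, rfl⟩ : ∃ m, n = m + 3 := ⟨n - 3, by omega⟩
  clear hn
  have e1 : m + 3 - 3 = m := by omega
  have e2 : m + 3 - 2 = m + 1 := by omega
  have e3 : m + 3 - 1 = m + 2 := by omega
  rw [e1, e2, e3]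
  set M : ℝ := (Nat.factorial m : ℝ) with hM
  have hMpos : 0 < M := by rw [hM]; exact_mod_cast Nat.factorial_pos m
  set mR : ℝ := (m : ℝ) with hmR
  have hmR0 : 0 ≤ mR := by positivity
  have h1 : ((Nat.factorial (m + 1)) : ℝ) = (mR + 1) * M := by
    rw [Nat.factorial_succ]; push_cast; ring
  have h2 : ((Nat.factorial (m + 2)) : ℝ) = (mR + 2) * ((mR + 1) * M) := by
    rw [Nat.factorial_succ, Nat.factorial_succ]; push_cast; ring
  rw [show ((↑(m + 3) : ℝ) - 2) = mR + 1 by push_cast; ring]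
  simp only [h1, h2]
  have hv2 : 0 < v ^ 2 := by positivity
  have habs : 0 < |v| := abs_pos.mpr hv
  have hRHS : u / |v| < Real.sqrt (mR + 1) ↔ u ^ 2 < (mR + 1) * v ^ 2 := by
    rw [show Real.sqrt (mR + 1) = Real.sqrt ((mR + 1) * v ^ 2) / |v| by
      rw [Real.sqrt_mul (by positivity), Real.sqrt_sq_eq_abs]
      field_simp]
    rw [div_lt_div_iff_of_pos_right habs]
    constructor
    · intro h
      have := Real.sqrt_nonneg ((mR + 1) * v ^ 2)
      nlinarith [Real.sq_sqrt (show (0:ℝ) ≤ (mR + 1) * v ^ 2 by positivity)]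
    · intro h
      have := Real.lt_sqrt (x := u) (y := (mR + 1) * v ^ 2) hu
      exact this.mpr h
  rw [hRHS]
  constructor
  · intro H
    by_contra hle
    push_neg at hle
    set D : ℝ := u ^ 2 - (mR + 1) * v ^ 2 with hD
    have hD0 : 0 ≤ D := by simp [hD]; linarith
    set r : ℝ := Real.sqrt ((mR + 2) * D) with hr
    have hr0 : 0 ≤ r := Real.sqrt_nonneg _
    have hr2 : r ^ 2 = (mR + 2) * D := Real.sq_sqrt (by positivity)
    set s0 : ℝ := (u * (mR + 2) + r) / ((mR + 2) * (mR + 1)) with hs0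
    refine H s0 (by positivity) ?_
    rw [hs0]
    field_simp
    linear_combination hr2 + (mR + 2) * hD
  · intro hlt s hs
    intro heq
    have hne1 : (mR + 1) * M ≠ 0 := by positivity
    have hne2 : (mR + 2) * ((mR + 1) * M) ≠ 0 := by positivity
    field_simp at heq
    have key : ((mR + 2) * ((mR + 1) * s ^ 2 - 2 * u * s) + (u ^ 2 + v ^ 2)) * (M ^ 2 * (mR + 1)) = 0 := by
      linear_combination (M ^ 2 * (mR + 1)) * heq
    have hpos : (0:ℝ) < M ^ 2 * (mR + 1) := by positivity
    have hinner : (mR + 2) * ((mR + 1) * s ^ 2 - 2 * u * s) + (u ^ 2 + v ^ 2) = 0 := by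
      rcases mul_eq_zero.mp key with h | h
      · exact h
      · exact absurd h (ne_of_gt hpos)
    nlinarith [sq_nonneg ((mR + 1) * s - u), hmR0]
end

section
/- Let $B$ be a real polynomial of degree $m$, $n > m$, and define $Q(\sigma,t) = \sum_{j=0}^m \binom{n-1}{j} B^{(j)}(\sigma) t^{m-j}$. Suppose $Q(0,t) \ge 0$ for all $t \in (0,+\infty)$ and $Q(0,t^\star) = 0$ for some $t^\star > 0$, and suppose $Q(0,\tau) > 0$ for at least one $\tau \in (0, t^\star)$. Then $\frac{\partial}{\partial \sigma} Q(\sigma, t^\star)\big|_{\sigma = 0} = n\, (t^\star)^{m-n+1} \int_0^{t^\star} Q(0,\tau)\, \tau^{n-1-m}\, d\tau > 0$. -/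
open Finset Polynomial Set MeasureTheory intervalIntegral

lemma key_sum (N m : ℕ) (b : ℕ → ℝ) (hb : b (m+1) = 0) (t : ℝ)
    (h0 : ∑ j ∈ range (m+1), (N.choose j : ℝ) * b j * t^(m+1-j) = 0) :
    ∑ j ∈ range (m+1), (N.choose j : ℝ) * b (j+1) * t^(m-j)
      = ∑ j ∈ range (m+1), ((N+1).choose j : ℝ) * b j * t^(m+1-j) := by
  have e1 : ∀ j : ℕ, m + 1 - (j+1) = m - j := fun j => by omega
  have h0' : (∑ j ∈ range m, (N.choose (j+1) : ℝ) * b (j+1) * t^(m-j)) + b 0 * t^(m+1) = 0 := by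
    rw [Finset.sum_range_succ' _ m] at h0
    simpa [e1] using h0
  have hL : ∑ j ∈ range (m+1), (N.choose j : ℝ) * b (j+1) * t^(m-j)
      = ∑ j ∈ range m, (N.choose j : ℝ) * b (j+1) * t^(m-j) := by
    rw [Finset.sum_range_succ, hb]; ring
  have hR : ∑ j ∈ range (m+1), ((N+1).choose j : ℝ) * b j * t^(m+1-j)
      = ∑ j ∈ range m, ((N+1).choose (j+1) : ℝ) * b (j+1) * t^(m-j) + b 0 * t^(m+1) := by
    rw [Finset.sum_range_succ' _ m]
    simp [e1]
  rw [hL, hR]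
  have : ∀ j : ℕ, ((N+1).choose (j+1) : ℝ) = (N.choose j : ℝ) + (N.choose (j+1) : ℝ) := by
    intro j; rw [Nat.choose_succ_succ]; push_cast; ring
  simp only [this, add_mul]
  rw [Finset.sum_add_distrib]
  linarith [h0']

theorem stmt_7 (n m : ℕ) (hm : m < n) (B : Polynomial ℝ) (hdeg : B.natDegree = m)
    (Q : ℝ → ℝ → ℝ)
    (hQ : ∀ σ t : ℝ, Q σ t = ∑ j ∈ Finset.range (m + 1), ((n - 1).choose j : ℝ) *
        (Polynomial.eval σ ((Polynomial.derivative)^[j] B)) * t ^ (m - j))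
    (tstar : ℝ) (htstar : 0 < tstar)
    (hnonneg : ∀ t : ℝ, 0 < t → 0 ≤ Q 0 t)
    (hzero : Q 0 tstar = 0)
    (hpos : ∃ τ ∈ Set.Ioo 0 tstar, 0 < Q 0 τ) :
    deriv (fun σ : ℝ => Q σ tstar) 0
        = (n : ℝ) * tstar ^ ((m : ℤ) - n + 1) *
          ∫ τ in (0:ℝ)..tstar, Q 0 τ * τ ^ (n - 1 - m) ∧
    0 < deriv (fun σ : ℝ => Q σ tstar) 0 := by
  obtain ⟨N, rfl⟩ : ∃ N, n = N + 1 := ⟨n - 1, by omega⟩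
  have hmN : m ≤ N := by omega
  have hN1 : N + 1 - 1 = N := rfl
  set b : ℕ → ℝ := fun j => Polynomial.eval 0 ((Polynomial.derivative)^[j] B) with hbdef
  have hb : b (m + 1) = 0 := by
    have : (Polynomial.derivative)^[m+1] B = 0 :=
      Polynomial.iterate_derivative_eq_zero (by omega)
    simp [hbdef, this]
  -- derivative computation
  have hder : HasDerivAt (fun σ : ℝ => Q σ tstar)
      (∑ j ∈ range (m+1), (N.choose j : ℝ) * b (j+1) * tstar ^ (m - j)) 0 := by
    have : (fun σ : ℝ => Q σ tstar) = fun σ : ℝ =>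
        ∑ j ∈ range (m+1), (N.choose j : ℝ) *
          (Polynomial.eval σ ((Polynomial.derivative)^[j] B)) * tstar ^ (m - j) := by
      funext σ; rw [hQ]; simp [hN1]
    rw [this]
    apply HasDerivAt.fun_sum
    intro j _
    have h1 : HasDerivAt (fun σ : ℝ => Polynomial.eval σ ((Polynomial.derivative)^[j] B))
        (b (j+1)) 0 := by
      have := Polynomial.hasDerivAt ((Polynomial.derivative)^[j] B) (0:ℝ)
      simpa [hbdef, Function.iterate_succ_apply'] using this
    simpa [mul_comm, mul_assoc, mul_left_comm] using (h1.const_mul ((N.choose j : ℝ))).mul_const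
      (tstar ^ (m - j))
  have hderiv : deriv (fun σ : ℝ => Q σ tstar) 0
      = ∑ j ∈ range (m+1), (N.choose j : ℝ) * b (j+1) * tstar ^ (m - j) := hder.deriv
  -- the zero hypothesis, in sum form
  have h0 : ∑ j ∈ range (m+1), (N.choose j : ℝ) * b j * tstar^(m+1-j) = 0 := by
    have : ∑ j ∈ range (m+1), (N.choose j : ℝ) * b j * tstar^(m+1-j)
        = tstar * Q 0 tstar := by
      rw [hQ, Finset.mul_sum]
      refine Finset.sum_congr rfl fun j hj => ?_
      have hj' : j ≤ m := by simpa [Nat.lt_succ_iff] using hj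
      have : tstar ^ (m + 1 - j) = tstar * tstar ^ (m - j) := by
        rw [← pow_succ']
        congr 1
        omega
      rw [this, hN1, hbdef]
      ring
    rw [this, hzero, mul_zero]
  -- integrand identity
  have hint : ∀ τ : ℝ, Q 0 τ * τ ^ (N - m)
      = ∑ j ∈ range (m+1), (N.choose j : ℝ) * b j * τ ^ (N - j) := by
    intro τ
    rw [hQ, Finset.sum_mul]
    refine Finset.sum_congr rfl fun j hj => ?_
    have hj' : j ≤ m := by simpa [Nat.lt_succ_iff] using hj
    have : τ ^ (m - j) * τ ^ (N - m) = τ ^ (N - j) := by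
      rw [← pow_add]; congr 1; omega
    rw [hN1, hbdef, mul_assoc, this]
  -- continuity of integrand
  have hcont : Continuous fun τ : ℝ => Q 0 τ * τ ^ (N - m) := by
    have : (fun τ : ℝ => Q 0 τ * τ ^ (N - m))
        = fun τ : ℝ => ∑ j ∈ range (m+1), (N.choose j : ℝ) * b j * τ ^ (N - j) := funext hint
    rw [this]
    exact continuous_finset_sum _ fun j _ => (continuous_const.mul (continuous_pow _))
  -- integral computation
  have hI : (∫ τ in (0:ℝ)..tstar, Q 0 τ * τ ^ (N + 1 - 1 - m))
      = ∑ j ∈ range (m+1), (N.choose j : ℝ) * b j * (tstar ^ (N + 1 - j) / ((N + 1 - j : ℕ) : ℝ)) := by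
    rw [hN1]
    have : (∫ τ in (0:ℝ)..tstar, Q 0 τ * τ ^ (N - m))
        = ∫ τ in (0:ℝ)..tstar, ∑ j ∈ range (m+1), (N.choose j : ℝ) * b j * τ ^ (N - j) := by
      congr 1; funext τ; exact hint τ
    rw [this, intervalIntegral.integral_finset_sum (f := fun j (τ : ℝ) => (N.choose j : ℝ) * b j * τ ^ (N - j)) (fun j _ =>
      ((continuous_const.mul (continuous_pow _)).intervalIntegrable _ _))]
    refine Finset.sum_congr rfl fun j hj => ?_
    have hj' : j ≤ m := by simpa [Nat.lt_succ_iff] using hj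
    have hjN : j ≤ N := le_trans hj' hmN
    have e1 : N - j + 1 = N + 1 - j := by omega
    rw [intervalIntegral.integral_const_mul, integral_pow, e1,
      zero_pow (by omega : N + 1 - j ≠ 0), sub_zero]
    have e2 : ((N + 1 - j : ℕ) : ℝ) = ((N - j : ℕ) : ℝ) + 1 := by
      rw [Nat.cast_sub hjN, Nat.cast_sub (by omega : j ≤ N + 1)]
      push_cast
      ring
    rw [e2]
  -- positivity of integral
  have hIpos : 0 < ∫ τ in (0:ℝ)..tstar, Q 0 τ * τ ^ (N + 1 - 1 - m) := by
    rw [hN1]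
    have hae : 0 ≤ᵐ[volume.restrict (Set.uIoc (0:ℝ) tstar)]
        fun τ : ℝ => Q 0 τ * τ ^ (N - m) := by
      rw [Set.uIoc_of_le htstar.le]
      filter_upwards [(ae_restrict_iff' measurableSet_Ioc).mpr
        (Filter.Eventually.of_forall fun x (hx : x ∈ Set.Ioc (0:ℝ) tstar) =>
          mul_nonneg (hnonneg x hx.1) (pow_nonneg hx.1.le (N - m)))] with x hx
      exact hx
    rw [intervalIntegral.integral_pos_iff_support_of_nonneg_ae' hae
      (hcont.intervalIntegrable _ _)]
    refine ⟨htstar, ?_⟩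
    obtain ⟨τ₀, hτ₀, hτpos⟩ := hpos
    set U : Set ℝ := ((fun τ : ℝ => Q 0 τ * τ ^ (N - m)) ⁻¹' Set.Ioi 0) ∩ Set.Ioo 0 tstar with hU
    have hUopen : IsOpen U := (isOpen_Ioi.preimage hcont).inter isOpen_Ioo
    have hτU : τ₀ ∈ U := ⟨mul_pos hτpos (pow_pos hτ₀.1 _), hτ₀⟩
    have hsub : U ⊆ Function.support (fun τ : ℝ => Q 0 τ * τ ^ (N - m)) ∩ Set.Ioc 0 tstar := by
      rintro x ⟨hx1, hx2⟩
      exact ⟨ne_of_gt hx1, Set.Ioo_subset_Ioc_self hx2⟩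
    exact lt_of_lt_of_le (hUopen.measure_pos volume ⟨τ₀, hτU⟩) (measure_mono hsub)
  -- the main identity
  have hchoose : ∀ j ∈ range (m+1),
      ((N+1).choose j : ℝ) * ((N + 1 - j : ℕ) : ℝ) = ((N:ℝ) + 1) * (N.choose j : ℝ) := by
    intro j hj
    have : (N+1).choose j * (N + 1 - j) = (N + 1) * N.choose j := by
      rw [← Nat.choose_succ_right_eq]
      simpa [Nat.succ_eq_add_one] using (Nat.add_one_mul_choose_eq N j).symm
    exact_mod_cast congrArg (Nat.cast : ℕ → ℝ) this
  have hmain : ((N:ℝ) + 1) * tstar ^ ((m : ℤ) - (N+1) + 1) *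
      (∑ j ∈ range (m+1), (N.choose j : ℝ) * b j * (tstar ^ (N + 1 - j) / ((N + 1 - j : ℕ) : ℝ)))
      = ∑ j ∈ range (m+1), (N.choose j : ℝ) * b (j+1) * tstar ^ (m - j) := by
    rw [key_sum N m b hb tstar h0, Finset.mul_sum]
    refine Finset.sum_congr rfl fun j hj => ?_
    have hj' : j ≤ m := by simpa [Nat.lt_succ_iff] using hj
    have hNj : (0:ℝ) < ((N + 1 - j : ℕ) : ℝ) := by
      have : 0 < N + 1 - j := by omega
      exact_mod_cast this
    have hzp : tstar ^ ((m : ℤ) - (N+1) + 1) * tstar ^ (N + 1 - j) = tstar ^ (m + 1 - j) := by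
      rw [← zpow_natCast tstar (N + 1 - j), ← zpow_natCast tstar (m + 1 - j),
        ← zpow_add₀ (ne_of_gt htstar)]
      congr 1
      push_cast [Nat.cast_sub (by omega : j ≤ N + 1), Nat.cast_sub (by omega : j ≤ m + 1)]
      ring
    have key2 : ((N:ℝ) + 1) * tstar ^ ((m : ℤ) - (N+1) + 1) *
        ((N.choose j : ℝ) * b j * (tstar ^ (N + 1 - j) / ((N + 1 - j : ℕ) : ℝ)))
        = (((N:ℝ) + 1) * (N.choose j : ℝ)) * b j *
          (tstar ^ ((m : ℤ) - (N+1) + 1) * tstar ^ (N + 1 - j)) / ((N + 1 - j : ℕ) : ℝ) := by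
      ring
    rw [key2, ← hchoose j hj, hzp]
    field_simp
  constructor
  · rw [hderiv, hI]
    have : ((N + 1 : ℕ) : ℝ) = (N : ℝ) + 1 := by push_cast; ring
    rw [this]
    have e : ((m : ℤ) - (N + 1 : ℕ) + 1) = ((m : ℤ) - (N+1) + 1) := by push_cast; ring
    rw [e]
    exact hmain.symm
  · have hI' : 0 < ∑ j ∈ range (m+1), (N.choose j : ℝ) * b j *
        (tstar ^ (N + 1 - j) / ((N + 1 - j : ℕ) : ℝ)) := by
      rw [← hI]; exact hIpos
    rw [hderiv, ← hmain]
    have h1 : (0:ℝ) < ((N:ℝ) + 1) * tstar ^ ((m : ℤ) - (N+1) + 1) := by positivity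
    exact mul_pos h1 hI'
end

section
/- Let $Q$ be a real polynomial of degree $m$. Then $Q(t) \ge 0$ for all $t \in [0, +\infty)$ if and only if there exist real polynomials $y_1$ of degree at most $\lfloor m/2 \rfloor$ and $y_2$ of degree at most $\lfloor (m-1)/2 \rfloor$ such that $Q(t-1) = y_1(t)^2 + (t-1)\, y_2(t)^2$ for all $t$. -/
open Polynomial

private lemma nn_of_mul {a b : ℝ} (h : 0 ≤ a * b) (ha : 0 < a) : 0 ≤ b := by nlinarith

/-- Limit argument: a polynomial nonnegative on `(r, ∞)` is nonnegative at `r`. -/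
private lemma eval_nonneg_of_forall_gt {R : Polynomial ℝ} {r : ℝ}
    (h : ∀ t, r < t → 0 ≤ R.eval t) : 0 ≤ R.eval r := by
  have hc : Filter.Tendsto (fun t => R.eval t) (nhdsWithin r (Set.Ioi r)) (nhds (R.eval r)) :=
    R.continuous.continuousWithinAt
  exact ge_of_tendsto hc (eventually_nhdsWithin_of_forall fun t ht => h t ht)

/-- Product of two polynomials of the form `a² + X b²` is again of that form. -/
private lemma mul_rep {F R a b p q : Polynomial ℝ} (hF : F = a ^ 2 + X * b ^ 2)
    (hR : R = p ^ 2 + X * q ^ 2) :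
    F * R = (a * p - X * b * q) ^ 2 + X * (a * q + b * p) ^ 2 := by
  subst hF hR; ring

/-- Main induction: a real polynomial nonnegative on `[0, ∞)` is of the form `p² + X q²`. -/
private lemma rep_exists : ∀ n : ℕ, ∀ Q : Polynomial ℝ, Q.natDegree ≤ n →
    (∀ t : ℝ, 0 ≤ t → 0 ≤ Q.eval t) →
    ∃ p q : Polynomial ℝ, Q = p ^ 2 + X * q ^ 2 := by
  intro n
  induction n with
  | zero =>
    intro Q hdeg hpos
    obtain ⟨c, rfl⟩ : ∃ c, Q = C c := ⟨_, Polynomial.eq_C_of_natDegree_eq_zero (Nat.le_zero.mp hdeg)⟩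
    have hc : 0 ≤ c := by simpa using hpos 0 le_rfl
    refine ⟨C (Real.sqrt c), 0, ?_⟩
    rw [← C_pow, Real.sq_sqrt hc]; ring
  | succ n ih =>
    intro Q hdeg hpos
    rcases eq_or_ne Q 0 with rfl | hQ0
    · exact ⟨0, 0, by ring⟩
    rcases Nat.eq_zero_or_pos Q.natDegree with h0 | hdpos
    · obtain ⟨c, rfl⟩ : ∃ c, Q = C c := ⟨_, Polynomial.eq_C_of_natDegree_eq_zero h0⟩
      have hc : 0 ≤ c := by simpa using hpos 0 le_rfl
      refine ⟨C (Real.sqrt c), 0, ?_⟩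
      rw [← C_pow, Real.sq_sqrt hc]; ring
    by_cases hroot : ∃ r : ℝ, 0 ≤ r ∧ Q.IsRoot r
    · obtain ⟨r, hr0, hr⟩ := hroot
      rcases eq_or_lt_of_le hr0 with rfl | hrpos
      · -- root at 0 : Q = X * R
        obtain ⟨R, hR⟩ : (X : Polynomial ℝ) ∣ Q := by
          simpa using dvd_iff_isRoot.mpr hr
        have hRne : R ≠ 0 := by rintro rfl; exact hQ0 (by simpa using hR)
        have hRpos : ∀ t : ℝ, 0 ≤ t → 0 ≤ R.eval t := by
          intro t ht
          rcases eq_or_lt_of_le ht with rfl | ht'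
          · refine eval_nonneg_of_forall_gt fun s hs => ?_
            have h2 := hpos s hs.le
            rw [hR] at h2; simp only [eval_mul, eval_X] at h2
            exact nn_of_mul h2 hs
          · have h2 := hpos t ht
            rw [hR] at h2; simp only [eval_mul, eval_X] at h2
            exact nn_of_mul h2 ht'
        have hdegR : R.natDegree ≤ n := by
          have : Q.natDegree = 1 + R.natDegree := by
            rw [hR, natDegree_mul X_ne_zero hRne, natDegree_X]
          omega
        obtain ⟨p, q, hpq⟩ := ih R hdegR hRpos
        exact ⟨X * q, p, by rw [hR, hpq]; ring⟩
      · -- positive root : even multiplicity, Q = (X - C r)² * T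
        have hmin : IsLocalMin (fun t => Q.eval t) r := by
          have hmem : Set.Ioi (0 : ℝ) ∈ nhds r := isOpen_Ioi.mem_nhds hrpos
          filter_upwards [hmem] with t ht
          show Q.eval r ≤ Q.eval t
          rw [show Q.eval r = 0 from hr]
          exact hpos t ht.le
        have hderiv : Q.derivative.eval r = 0 := by
          have h1 := hmin.deriv_eq_zero
          rwa [Polynomial.deriv] at h1
        obtain ⟨S, hS⟩ : (X - C r) ∣ Q := dvd_iff_isRoot.mpr hr
        have hSr : S.IsRoot r := by
          have h1 : Q.derivative = S + (X - C r) * S.derivative := by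
            rw [hS, derivative_mul, derivative_sub, derivative_X, derivative_C, sub_zero,
              one_mul]
          have h2 := congrArg (fun P => Polynomial.eval r P) h1
          simp only [hderiv, eval_add, eval_mul, eval_sub, eval_X, eval_C, sub_self,
            zero_mul, add_zero] at h2
          exact h2.symm
        obtain ⟨T, hT⟩ : (X - C r) ∣ S := dvd_iff_isRoot.mpr hSr
        have hQT : Q = (X - C r) ^ 2 * T := by rw [hS, hT]; ring
        have hTne : T ≠ 0 := by rintro rfl; exact hQ0 (by simpa using hQT)
        have hTval : ∀ t : ℝ, t ≠ r → 0 ≤ t → 0 ≤ T.eval t := by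
          intro t hne ht
          have h2 := hpos t ht
          rw [hQT] at h2
          simp only [eval_mul, eval_pow, eval_sub, eval_X, eval_C] at h2
          have hpow : 0 < (t - r) ^ 2 := by
            have := sub_ne_zero.mpr hne
            positivity
          exact nn_of_mul h2 hpow
        have hTpos : ∀ t : ℝ, 0 ≤ t → 0 ≤ T.eval t := by
          intro t ht
          rcases eq_or_ne t r with rfl | hne
          · exact eval_nonneg_of_forall_gt fun s hs => hTval s (ne_of_gt hs) (le_trans ht hs.le)
          · exact hTval t hne ht
        have hdegT : T.natDegree ≤ n := by
          have hx2 : ((X - C r : Polynomial ℝ) ^ 2) ≠ 0 := pow_ne_zero _ (X_sub_C_ne_zero r)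
          have : Q.natDegree = 2 + T.natDegree := by
            rw [hQT, natDegree_mul hx2 hTne, natDegree_pow, natDegree_X_sub_C]
          omega
        obtain ⟨p, q, hpq⟩ := ih T hdegT hTpos
        exact ⟨(X - C r) * p, (X - C r) * q, by rw [hQT, hpq]; ring⟩
    · push_neg at hroot
      by_cases hneg : ∃ r : ℝ, Q.IsRoot r
      · -- negative root : Q = (X - C r) * R with r < 0
        obtain ⟨r, hr⟩ := hneg
        have hrneg : r < 0 := by
          by_contra h
          exact hroot r (le_of_not_gt h) hr
        obtain ⟨R, hR⟩ : (X - C r) ∣ Q := dvd_iff_isRoot.mpr hr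
        have hRne : R ≠ 0 := by rintro rfl; exact hQ0 (by simpa using hR)
        have hRpos : ∀ t : ℝ, 0 ≤ t → 0 ≤ R.eval t := by
          intro t ht
          have h2 := hpos t ht
          rw [hR] at h2
          simp only [eval_mul, eval_sub, eval_X, eval_C] at h2
          exact nn_of_mul h2 (by linarith)
        have hdegR : R.natDegree ≤ n := by
          have : Q.natDegree = 1 + R.natDegree := by
            rw [hR, natDegree_mul (X_sub_C_ne_zero r) hRne, natDegree_X_sub_C]
          omega
        obtain ⟨p, q, hpq⟩ := ih R hdegR hRpos
        have hF : (X - C r : Polynomial ℝ) = (C (Real.sqrt (-r))) ^ 2 + X * 1 ^ 2 := by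
          rw [← C_pow, Real.sq_sqrt (by linarith : (0:ℝ) ≤ -r)]
          rw [map_neg]; ring
        exact ⟨_, _, mul_rep hF hpq ▸ hR⟩
      · -- no real root : quadratic complex factor
        push_neg at hneg
        have hmapdeg : 0 < (Q.map (algebraMap ℝ ℂ)).degree := by
          rw [degree_map_eq_of_injective (algebraMap ℝ ℂ).injective]
          exact natDegree_pos_iff_degree_pos.mp hdpos
        obtain ⟨z, hz⟩ := Complex.exists_root hmapdeg
        have haev : aeval z Q = 0 := by rwa [aeval_def, ← eval_map]
        have him : z.im ≠ 0 := by
          intro h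
          have hzre : z = (z.re : ℂ) := by
            exact Complex.ext rfl (by simpa using h)
          have : ((Q.eval z.re : ℝ) : ℂ) = 0 := by
            have h4 : aeval ((z.re : ℝ) : ℂ) Q = ((aeval z.re Q : ℝ) : ℂ) :=
              aeval_algebraMap_apply ℂ z.re Q
            rw [← haev, hzre, h4]
            norm_num [aeval_def, eval₂_eq_eval_map, eval_map_algebraMap]
          exact hneg z.re (by exact_mod_cast this)
        obtain ⟨R, hR⟩ := Q.quadratic_dvd_of_aeval_eq_zero_im_ne_zero haev him
        set D : Polynomial ℝ := X ^ 2 - C (2 * z.re) * X + C (‖z‖ ^ 2) with hD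
        have hnormsq : ‖z‖ ^ 2 = z.re ^ 2 + z.im ^ 2 := by
          rw [Complex.sq_norm, Complex.normSq_apply]; ring
        have hDpos : ∀ t : ℝ, 0 < D.eval t := by
          intro t
          have : D.eval t = (t - z.re) ^ 2 + z.im ^ 2 := by
            simp only [hD, eval_add, eval_sub, eval_mul, eval_pow, eval_X, eval_C, hnormsq]
            ring
          rw [this]
          positivity
        have hRne : R ≠ 0 := by rintro rfl; exact hQ0 (by simpa using hR)
        have hRpos : ∀ t : ℝ, 0 ≤ t → 0 ≤ R.eval t := by
          intro t ht
          have h2 := hpos t ht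
          rw [hR, eval_mul] at h2
          exact nn_of_mul h2 (hDpos t)
        have hDdeg : D.natDegree = 2 := by
          rw [hD]; compute_degree!
        have hDne : D ≠ 0 := fun h => by simp [h] at hDdeg
        have hdegR : R.natDegree ≤ n := by
          have : Q.natDegree = 2 + R.natDegree := by
            rw [hR, natDegree_mul hDne hRne, hDdeg]
          omega
        obtain ⟨p, q, hpq⟩ := ih R hdegR hRpos
        set a : ℝ := ‖z‖ with ha
        set d : ℝ := Real.sqrt (2 * a - 2 * z.re) with hd
        have hre : z.re ≤ a := by
          rw [ha]
          exact (le_abs_self z.re).trans (Complex.abs_re_le_norm z)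
        have hd2 : d ^ 2 = 2 * a - 2 * z.re := Real.sq_sqrt (by linarith)
        have hF : D = (X - C a) ^ 2 + X * (C d) ^ 2 := by
          apply Polynomial.funext
          intro x
          simp only [hD, eval_add, eval_sub, eval_mul, eval_pow, eval_X, eval_C]
          linear_combination (-x) * hd2
        exact ⟨_, _, mul_rep hF hpq ▸ hR⟩

/-- Degree bounds come for free from the representation (opposite parities). -/
private lemma degBound {p q Q : Polynomial ℝ} (h : Q = p ^ 2 + X * q ^ 2) :
    p.natDegree ≤ Q.natDegree / 2 ∧ q.natDegree ≤ (Q.natDegree - 1) / 2 := by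
  rcases eq_or_ne p 0 with rfl | hp
  · rcases eq_or_ne q 0 with rfl | hq
    · simp
    · have h' : Q = X * q ^ 2 := by rw [h]; ring
      have : Q.natDegree = 1 + 2 * q.natDegree := by
        rw [h', natDegree_mul X_ne_zero (pow_ne_zero 2 hq), natDegree_X, natDegree_pow]
      refine ⟨by simp, by omega⟩
  · rcases eq_or_ne q 0 with rfl | hq
    · have h' : Q = p ^ 2 := by rw [h]; ring
      have : Q.natDegree = 2 * p.natDegree := by rw [h', natDegree_pow]
      refine ⟨by omega, by simp⟩
    · have hdp : (p ^ 2).natDegree = 2 * p.natDegree := natDegree_pow p 2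
      have hdq : (X * q ^ 2).natDegree = 1 + 2 * q.natDegree := by
        rw [natDegree_mul X_ne_zero (pow_ne_zero 2 hq), natDegree_X, natDegree_pow]
      have hQdeg : Q.natDegree = max (2 * p.natDegree) (1 + 2 * q.natDegree) := by
        rcases lt_or_gt_of_ne (show (p^2).natDegree ≠ (X * q^2).natDegree by rw [hdp, hdq]; omega) with h1 | h1
        · rw [h, natDegree_add_eq_right_of_natDegree_lt h1, hdq]; omega
        · rw [h, natDegree_add_eq_left_of_natDegree_lt h1, hdp]; omega
      omega

theorem stmt_12 (m : ℕ) (Q : Polynomial ℝ) (hdeg : Q.natDegree = m) :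
    (∀ t : ℝ, 0 ≤ t → 0 ≤ Q.eval t) ↔
      ∃ y₁ y₂ : Polynomial ℝ, y₁.natDegree ≤ m / 2 ∧ y₂.natDegree ≤ (m - 1) / 2 ∧
        ∀ t : ℝ, Q.eval (t - 1) = (y₁.eval t) ^ 2 + (t - 1) * (y₂.eval t) ^ 2 := by
  subst hdeg
  constructor
  · intro hQ
    obtain ⟨p, q, hpq⟩ := rep_exists Q.natDegree Q le_rfl hQ
    obtain ⟨hp, hq⟩ := degBound hpq
    refine ⟨p.comp (X - C 1), q.comp (X - C 1), ?_, ?_, ?_⟩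
    · rwa [natDegree_comp, natDegree_X_sub_C, mul_one]
    · rwa [natDegree_comp, natDegree_X_sub_C, mul_one]
    · intro t
      rw [hpq]
      simp only [eval_comp, eval_add, eval_mul, eval_pow, eval_sub, eval_X, eval_C]
  · rintro ⟨y₁, y₂, -, -, h⟩ t ht
    have h2 := h (t + 1)
    rw [add_sub_cancel_right] at h2
    rw [h2]
    positivity
end

section
/- Let $H(s) = B(s)/(s-\sigma)^n$ with $\sigma < 0$, $B$ of degree $m < n$ with positive leading coefficient $K$, and suppose $Q(\sigma,t) := \sum_{j=0}^m \binom{n-1}{j} B^{(j)}(\sigma) t^{m-j} \ge 0$ for all $t \in (0,\infty)$. Then the function $h(t) = \frac{e^{\sigma t} t^{n-1-m}}{(n-1)!} Q(\sigma,t)$ is non-negative on $[0,\infty)$ and $\int_0^\infty h(t)\, dt = B(0)/(-\sigma)^n$. -/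
open MeasureTheory Real Set Polynomial

lemma aux_integrable (k : ℕ) {b : ℝ} (hb : 0 < b) :
    IntegrableOn (fun t : ℝ => t ^ k * Real.exp (-(b * t))) (Set.Ioi 0) := by
  have h := integrableOn_rpow_mul_exp_neg_mul_rpow (p := 1) (s := (k:ℝ)) (b := b)
    (neg_one_lt_zero.trans_le (Nat.cast_nonneg k)) one_pos hb
  refine (integrableOn_congr_fun (fun t ht => ?_) measurableSet_Ioi).mp h
  rw [Real.rpow_one, Real.rpow_natCast, neg_mul]

lemma aux_integral (k : ℕ) {b : ℝ} (hb : 0 < b) :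
    ∫ t in Set.Ioi (0:ℝ), t ^ k * Real.exp (-(b * t)) = (Nat.factorial k : ℝ) / b ^ (k+1) := by
  have h := Real.integral_rpow_mul_exp_neg_mul_Ioi (a := (k:ℝ)+1) (r := b)
    (by positivity) hb
  rw [show ((k:ℝ)+1) - 1 = (k:ℝ) by ring] at h
  have : ∫ t in Set.Ioi (0:ℝ), t ^ k * Real.exp (-(b * t)) =
      ∫ t in Set.Ioi (0:ℝ), t ^ ((k:ℝ)) * Real.exp (-(b * t)) := by
    refine setIntegral_congr_fun measurableSet_Ioi (fun t ht => ?_)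
    rw [Real.rpow_natCast]
  rw [this, h, Real.Gamma_nat_eq_factorial,
    show ((k:ℝ)+1) = ((k+1 : ℕ) : ℝ) by push_cast; ring, Real.rpow_natCast]
  rw [div_pow, one_pow, one_div, inv_mul_eq_div]

theorem stmt_13 (n m : ℕ) (hm : m < n) (σ : ℝ) (hσ : σ < 0)
    (B : Polynomial ℝ) (K : ℝ) (hdeg : B.natDegree = m)
    (hlead : B.leadingCoeff = K) (hK : 0 < K)
    (hQ : ∀ t : ℝ, 0 < t →
      0 ≤ ∑ j ∈ Finset.range (m + 1), ((n - 1).choose j : ℝ) *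
            (Polynomial.eval σ ((Polynomial.derivative)^[j] B)) * t ^ (m - j)) :
    (∀ t : ℝ, 0 ≤ t →
        0 ≤ Real.exp (σ * t) * t ^ (n - 1 - m) / (Nat.factorial (n - 1) : ℝ) *
          ∑ j ∈ Finset.range (m + 1), ((n - 1).choose j : ℝ) *
            (Polynomial.eval σ ((Polynomial.derivative)^[j] B)) * t ^ (m - j)) ∧
    (∫ t in Set.Ioi (0:ℝ),
        Real.exp (σ * t) * t ^ (n - 1 - m) / (Nat.factorial (n - 1) : ℝ) *
          ∑ j ∈ Finset.range (m + 1), ((n - 1).choose j : ℝ) *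
            (Polynomial.eval σ ((Polynomial.derivative)^[j] B)) * t ^ (m - j))
      = B.eval 0 / (-σ) ^ n := by
  have hb : (0:ℝ) < -σ := by linarith
  set D : ℕ → ℝ := fun j => Polynomial.eval σ ((Polynomial.derivative)^[j] B) with hD
  set Q : ℝ → ℝ := fun t => ∑ j ∈ Finset.range (m + 1),
      ((n - 1).choose j : ℝ) * D j * t ^ (m - j) with hQdef
  have hQcont : Continuous Q := by
    apply continuous_finset_sum
    intro j _
    exact (continuous_const.mul (continuous_pow _))
  have hQ0 : ∀ t : ℝ, 0 ≤ t → 0 ≤ Q t := by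
    intro t ht
    rcases ht.eq_or_lt with h | h
    · subst h
      have htd : Filter.Tendsto Q (nhdsWithin 0 (Set.Ioi 0)) (nhds (Q 0)) :=
        (hQcont.continuousAt).continuousWithinAt.tendsto
      exact ge_of_tendsto htd
        (Filter.eventually_of_mem self_mem_nhdsWithin (fun x hx => hQ x hx))
    · exact hQ t h
  constructor
  · intro t ht
    exact mul_nonneg (by positivity) (hQ0 t ht)
  -- compute integral
  have hjle : ∀ j, j ∈ Finset.range (m+1) → j ≤ n - 1 := by
    intro j hj
    have := Finset.mem_range.mp hj
    omega
  have key : ∀ t ∈ Set.Ioi (0:ℝ),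
      Real.exp (σ * t) * t ^ (n - 1 - m) / (Nat.factorial (n - 1) : ℝ) * Q t
      = ∑ j ∈ Finset.range (m + 1),
          (((n - 1).choose j : ℝ) * D j / (Nat.factorial (n - 1) : ℝ)) *
            (t ^ (n - 1 - j) * Real.exp (-((-σ) * t))) := by
    intro t ht
    rw [hQdef, Finset.mul_sum]
    refine Finset.sum_congr rfl (fun j hj => ?_)
    have h1 : n - 1 - m + (m - j) = n - 1 - j := by
      have := Finset.mem_range.mp hj; omega
    rw [← h1, pow_add]
    have : -((-σ) * t) = σ * t := by ring
    rw [this]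
    ring
  rw [setIntegral_congr_fun measurableSet_Ioi key]
  rw [MeasureTheory.integral_finset_sum _ (fun j _ =>
    ((aux_integrable (n - 1 - j) hb).const_mul _))]
  have hint : ∀ j ∈ Finset.range (m+1),
      (∫ t in Set.Ioi (0:ℝ), (((n - 1).choose j : ℝ) * D j / (Nat.factorial (n - 1) : ℝ)) *
        (t ^ (n - 1 - j) * Real.exp (-((-σ) * t))))
      = (D j / (Nat.factorial j : ℝ) * (-σ) ^ j) / (-σ) ^ n := by
    intro j hj
    rw [MeasureTheory.integral_const_mul, aux_integral _ hb]
    have hjn : j ≤ n - 1 := hjle j hj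
    have hfac : ((n-1).choose j : ℝ) * (Nat.factorial (n - 1 - j) : ℝ) *
        (Nat.factorial j : ℝ) = (Nat.factorial (n-1) : ℝ) := by
      rw [← Nat.cast_mul, ← Nat.cast_mul]
      congr 1
      rw [mul_right_comm]
      exact Nat.choose_mul_factorial_mul_factorial hjn
    have hpow : (-σ) ^ (n - 1 - j + 1) * (-σ) ^ j = (-σ) ^ n := by
      rw [← pow_add]; congr 1; omega
    have hfacpos : (0:ℝ) < (Nat.factorial (n-1) : ℝ) := by positivity
    have hjpos : (0:ℝ) < (Nat.factorial j : ℝ) := by positivity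
    field_simp
    rw [← hfac, ← hpow]
    ring
  rw [Finset.sum_congr rfl hint, ← Finset.sum_div]
  congr 1
  -- Taylor expansion: B.eval 0 = ∑ D j / j! * (-σ)^j
  have htaylor : B.eval 0 = (Polynomial.taylor σ B).eval (-σ) := by
    rw [show (-σ) = 0 - σ by ring, Polynomial.taylor_eval_sub]
  rw [htaylor, Polynomial.eval_eq_sum_range, Polynomial.natDegree_taylor, hdeg]
  refine Finset.sum_congr rfl (fun j hj => ?_)
  rw [Polynomial.taylor_coeff]
  have hcoeff : (Polynomial.hasseDeriv j B).eval σ = D j / (Nat.factorial j : ℝ) := by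
    have h := Polynomial.factorial_smul_hasseDeriv (R := ℝ) (k := j)
    have h2 : (Nat.factorial j • Polynomial.hasseDeriv j B) = (Polynomial.derivative)^[j] B := by
      rw [← h]; rfl
    have h3 : (Nat.factorial j : ℝ) * (Polynomial.hasseDeriv j B).eval σ = D j := by
      rw [hD]
      simp only [← h2, Polynomial.eval_smul, nsmul_eq_mul, Nat.cast_id, Polynomial.eval_mul, Polynomial.eval_natCast]
    field_simp
    linarith [h3]
  rw [hcoeff]
end

section
/- Let $H'(s) = B(s)/\prod_{i=1}^n (s - p_i)$ with $p_i \in \mathbb{C}$, $\mathrm{Re}(p_i) < 0$, poles occurring in conjugate pairs or real, $\deg B < n$, $B$ real. If the impulse response $h'$ of $H'$ is non-negative on $[0,\infty)$, then the impulse response of $H(s) = B(s)/(s - \sigma)^n$ with $\sigma = \max_i \mathrm{Re}(p_i) < 0$ is also non-negative on $[0,\infty)$. -/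
open MeasureTheory Set Filter Polynomial

noncomputable section

lemma tendsto_pow_mul_exp_neg_mul (k : ℕ) {c : ℝ} (hc : 0 < c) :
    Tendsto (fun t : ℝ => t^k * Real.exp (-(c*t))) atTop (nhds 0) := by
  have h : Tendsto (fun t : ℝ => c⁻¹^k * ((c*t)^k * Real.exp (-(c*t)))) atTop (nhds 0) := by
    have : Tendsto (fun t : ℝ => (c*t)^k * Real.exp (-(c*t))) atTop (nhds 0) := by
      have := (Real.tendsto_pow_mul_exp_neg_atTop_nhds_zero k).comp
        ((tendsto_const_mul_atTop_of_pos hc).mpr tendsto_id)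
      simpa [Function.comp_def] using this
    simpa using tendsto_const_nhds.mul this
  refine h.congr fun t => ?_
  rw [mul_pow]
  field_simp
  ring
  rw [← mul_pow, mul_inv_cancel₀ hc.ne', one_pow, one_mul]

lemma exp_fun_hasDerivAt (z : ℂ) (m : ℕ) (t : ℝ) :
    HasDerivAt (fun u : ℝ => (u:ℂ)^(m+1) * Complex.exp (-(z*u)))
      ((m+1) * (t:ℂ)^m * Complex.exp (-(z*t)) - z * ((t:ℂ)^(m+1) * Complex.exp (-(z*t)))) t := by
  have h1 : HasDerivAt (fun w : ℂ => w^(m+1) * Complex.exp (-(z*w)))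
      ((m+1) * (t:ℂ)^m * Complex.exp (-(z*(t:ℂ))) + (t:ℂ)^(m+1) * (Complex.exp (-(z*(t:ℂ))) * (-z))) t := by
    have hp : HasDerivAt (fun w : ℂ => w^(m+1)) ((m+1) * (t:ℂ)^m) (t:ℂ) := by
      simpa using hasDerivAt_pow (m+1) (t:ℂ)
    have he : HasDerivAt (fun w : ℂ => Complex.exp (-(z*w))) (Complex.exp (-(z*(t:ℂ))) * (-z)) (t:ℂ) := by
      have hl : HasDerivAt (fun w : ℂ => -(z*w)) (-z) (t:ℂ) := by
        simpa [Pi.neg_def] using ((hasDerivAt_id (t:ℂ)).const_mul z).neg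
      simpa [Function.comp_def] using (Complex.hasDerivAt_exp (-(z*(t:ℂ)))).comp (t:ℂ) hl
    simpa [Pi.mul_def] using hp.mul he
  have := h1.comp_ofReal
  convert this using 1
  ring

lemma lap_tendsto_zero (k : ℕ) {z : ℂ} (hz : 0 < z.re) :
    Tendsto (fun t : ℝ => (t:ℂ)^k * Complex.exp (-(z*t))) atTop (nhds 0) := by
  rw [tendsto_zero_iff_norm_tendsto_zero]
  have h : ∀ᶠ t : ℝ in atTop, ‖(t:ℂ)^k * Complex.exp (-(z*t))‖
      = t^k * Real.exp (-(z.re*t)) := by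
    filter_upwards [eventually_ge_atTop (0:ℝ)] with t ht
    rw [norm_mul, norm_pow, Complex.norm_exp]
    rw [Complex.norm_real, Real.norm_eq_abs, abs_of_nonneg ht]
    congr 2
    simp [Complex.mul_re]
  rw [tendsto_congr' h]
  exact tendsto_pow_mul_exp_neg_mul k hz

lemma lap_integrableOn_real (m : ℕ) {c : ℝ} (hc : 0 < c) :
    IntegrableOn (fun t : ℝ => t^m * Real.exp (-(c * t))) (Set.Ioi 0) := by
  apply integrable_of_isBigO_exp_neg (half_pos hc)
  · exact Continuous.continuousOn (by continuity)
  · have hg : Tendsto (fun t : ℝ => t^m * Real.exp (-(c/2*t))) atTop (nhds 0) :=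
      tendsto_pow_mul_exp_neg_mul m (half_pos hc)
    have h1 : (fun t : ℝ => t^m * Real.exp (-(c/2*t))) =O[atTop] (fun _ => (1:ℝ)) :=
      hg.isBigO_one ℝ
    have h2 := h1.mul (Asymptotics.isBigO_refl (fun t : ℝ => Real.exp (-(c/2) * t)) atTop)
    refine Asymptotics.IsBigO.congr' h2 ?_ ?_
    · filter_upwards with t
      rw [mul_assoc, ← Real.exp_add]
      ring_nf
    · filter_upwards with t
      rw [one_mul]

lemma lap_integrableOn (m : ℕ) {z : ℂ} (hz : 0 < z.re) :
    IntegrableOn (fun t : ℝ => (t:ℂ)^m * Complex.exp (-(z * t))) (Set.Ioi 0) := by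
  apply Integrable.mono (lap_integrableOn_real m hz)
  · exact (Continuous.aestronglyMeasurable (by continuity)).restrict
  · filter_upwards [ae_restrict_mem measurableSet_Ioi] with t ht
    rw [norm_mul, norm_pow, Complex.norm_exp,
      Complex.norm_real, Real.norm_eq_abs, abs_of_nonneg (le_of_lt ht)]
    rw [Real.norm_eq_abs, abs_of_nonneg (mul_nonneg (pow_nonneg (le_of_lt ht) m) (Real.exp_pos _).le)]
    apply le_of_eq
    congr 2
    simp [Complex.mul_re]

lemma exp_neg_hasDerivAt (z : ℂ) (t : ℝ) :
    HasDerivAt (fun u : ℝ => Complex.exp (-(z*u))) (Complex.exp (-(z*t)) * (-z)) t := by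
  have he : HasDerivAt (fun w : ℂ => Complex.exp (-(z*w))) (Complex.exp (-(z*(t:ℂ))) * (-z)) (t:ℂ) := by
    have hl : HasDerivAt (fun w : ℂ => -(z*w)) (-z) (t:ℂ) := by
      simpa [Pi.neg_def] using ((hasDerivAt_id (t:ℂ)).const_mul z).neg
    simpa [Function.comp_def] using (Complex.hasDerivAt_exp (-(z*(t:ℂ)))).comp (t:ℂ) hl
  exact he.comp_ofReal

lemma lap_value (m : ℕ) {z : ℂ} (hz : 0 < z.re) :
    ∫ t in Set.Ioi (0:ℝ), (t:ℂ)^m * Complex.exp (-(z*t)) = (Nat.factorial m : ℂ) / z^(m+1) := by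
  have hz0 : z ≠ 0 := fun h => by simp [h] at hz
  induction m with
  | zero =>
      have key := integral_Ioi_of_hasDerivAt_of_tendsto
        (f := fun u : ℝ => -Complex.exp (-(z*u))/z)
        (f' := fun u : ℝ => Complex.exp (-(z*u))) (a := 0)
        (Continuous.continuousWithinAt (by continuity))
        (fun x _ => by
          have := ((exp_neg_hasDerivAt z x).neg).div_const z
          refine this.congr_deriv ?_
          field_simp)
        (by simpa using (lap_integrableOn 0 hz))
        (by
          have h0 := lap_tendsto_zero 0 hz
          simp only [pow_zero, one_mul] at h0
          have := (h0.neg).div_const z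
          simpa using this)
      simp only [pow_zero, one_mul] at key ⊢
      rw [key]
      simp [Complex.exp_zero, neg_div, Nat.factorial]
  | succ m ih =>
      have hint1 : Integrable (fun x : ℝ => ((m:ℂ)+1) * ((x:ℂ)^m * Complex.exp (-(z*x)))) (volume.restrict (Set.Ioi 0)) :=
        (lap_integrableOn m hz).const_mul _
      have hint2 : Integrable (fun x : ℝ => z * ((x:ℂ)^(m+1) * Complex.exp (-(z*x)))) (volume.restrict (Set.Ioi 0)) :=
        (lap_integrableOn (m+1) hz).const_mul z
      have key := integral_Ioi_of_hasDerivAt_of_tendsto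
        (f := fun u : ℝ => (u:ℂ)^(m+1) * Complex.exp (-(z*u)))
        (f' := fun u : ℝ => ((m:ℂ)+1) * ((u:ℂ)^m * Complex.exp (-(z*u))) - z * ((u:ℂ)^(m+1) * Complex.exp (-(z*u))))
        (a := 0)
        (Continuous.continuousWithinAt (by continuity))
        (fun x _ => by
          have := exp_fun_hasDerivAt z m x
          refine this.congr_deriv ?_
          push_cast
          ring)
        (hint1.sub hint2)
        (lap_tendsto_zero (m+1) hz)
      rw [integral_sub hint1 hint2, integral_const_mul, integral_const_mul, ih] at key
      simp only [Complex.ofReal_zero, zero_pow (Nat.succ_ne_zero m), zero_mul, sub_zero, sub_eq_zero] at key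
      rw [eq_div_iff (pow_ne_zero _ hz0)]
      push_cast [Nat.factorial_succ]
      have hkey : ((m:ℂ)+1) * ((m.factorial : ℂ) / z^(m+1)) = z * ∫ t in Set.Ioi (0:ℝ), (t:ℂ)^(m+1) * Complex.exp (-(z*t)) := key
      field_simp at hkey
      linear_combination -1 * hkey

end

def nnReal : Subsemiring ℂ where
  carrier := {z | z.im = 0 ∧ 0 ≤ z.re}
  zero_mem' := by simp
  one_mem' := by simp
  add_mem' := by
    rintro a b ⟨ha1, ha2⟩ ⟨hb1, hb2⟩
    exact ⟨by simp [ha1, hb1], by simp; linarith⟩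
  mul_mem' := by
    rintro a b ⟨ha1, ha2⟩ ⟨hb1, hb2⟩
    constructor
    · simp [Complex.mul_im, ha1, hb1]
    · simp only [Complex.mul_re, ha1, hb1, mul_zero, sub_zero]
      positivity

@[simp] lemma mem_nnReal {z : ℂ} : z ∈ nnReal ↔ z.im = 0 ∧ 0 ≤ z.re := Iff.rfl

def PolyNN (P : Polynomial ℂ) : Prop := ∀ k, P.coeff k ∈ nnReal

lemma PolyNN.mul {P Q : Polynomial ℂ} (hP : PolyNN P) (hQ : PolyNN Q) : PolyNN (P * Q) := by
  intro k
  rw [Polynomial.coeff_mul]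
  exact Subsemiring.sum_mem _ fun x _ => Subsemiring.mul_mem _ (hP x.1) (hQ x.2)

lemma polyNN_one : PolyNN 1 := by
  intro k
  rcases eq_or_ne k 0 with rfl | hk
  · simpa using one_mem nnReal
  · simpa [Polynomial.coeff_one, hk] using zero_mem nnReal

lemma polyNN_linear {w : ℂ} (hw : w.im = 0) (hre : 0 ≤ w.re) : PolyNN (X + C w) := by
  intro k
  rcases eq_or_ne k 0 with rfl | hk
  · simpa [Polynomial.coeff_add] using ⟨hw, hre⟩
  rcases eq_or_ne k 1 with rfl | hk1
  · simpa [Polynomial.coeff_add, Polynomial.coeff_C] using one_mem nnReal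
  · simpa [Polynomial.coeff_add, Polynomial.coeff_C, hk, hk1, Polynomial.coeff_X,
      Ne.symm hk1] using zero_mem nnReal

lemma polyNN_quad {w : ℂ} (hre : 0 ≤ w.re) :
    PolyNN ((X + C w) * (X + C ((starRingEnd ℂ) w))) := by
  have hexp : (X + C w) * (X + C ((starRingEnd ℂ) w))
      = X^2 + C (w + (starRingEnd ℂ) w) * X + C (w * (starRingEnd ℂ) w) := by
    simp only [Polynomial.C_add, Polynomial.C_mul]
    ring
  rw [hexp]
  have hsum : w + (starRingEnd ℂ) w = ((2 * w.re : ℝ) : ℂ) := Complex.add_conj w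
  have hprod : w * (starRingEnd ℂ) w = ((Complex.normSq w : ℝ) : ℂ) := Complex.mul_conj w
  intro k
  rcases eq_or_ne k 0 with rfl | hk0
  · simp only [Polynomial.coeff_add, Polynomial.coeff_C_mul, Polynomial.coeff_X_pow,
      Polynomial.coeff_X_zero, Polynomial.coeff_C_zero, mul_zero, zero_add]
    rw [hprod]
    norm_num
    exact Complex.normSq_nonneg w
  rcases eq_or_ne k 1 with rfl | hk1
  · simp only [Polynomial.coeff_add, Polynomial.coeff_C_mul, Polynomial.coeff_X_pow,
      Polynomial.coeff_X_one, mul_one, Polynomial.coeff_C, hk0]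
    rw [hsum]
    norm_num
    positivity
  rcases eq_or_ne k 2 with rfl | hk2
  · simp only [Polynomial.coeff_add, Polynomial.coeff_C_mul, Polynomial.coeff_X_pow,
      Polynomial.coeff_X, Polynomial.coeff_C, hk0, hk1]
    norm_num
  · simp only [Polynomial.coeff_add, Polynomial.coeff_C_mul, Polynomial.coeff_X_pow,
      Polynomial.coeff_X, Polynomial.coeff_C, hk0, hk1, hk2]
    simpa [hk0, hk1, hk2, Ne.symm hk1] using zero_mem nnReal

lemma polyNN_of_conj_multiset (M : Multiset ℂ)
    (hM : M.map (starRingEnd ℂ) = M) (hre : ∀ z ∈ M, 0 ≤ z.re) :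
    PolyNN ((M.map (fun w => X + C w)).prod) := by
  induction M using Multiset.strongInductionOn with
  | ih M IH =>
  rcases Multiset.empty_or_exists_mem M with rfl | ⟨w, hw⟩
  · simpa using polyNN_one
  rcases eq_or_ne w.im 0 with him | him
  · -- real root
    have herase : M = w ::ₘ M.erase w := (Multiset.cons_erase hw).symm
    have hM' : (M.erase w).map (starRingEnd ℂ) = M.erase w := by
      rw [Multiset.map_erase _ (RingHom.injective _) w M, hM]
      congr 1
      exact Complex.conj_eq_iff_im.mpr him
    rw [herase, Multiset.map_cons, Multiset.prod_cons]
    exact (polyNN_linear him (hre w hw)).mul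
      (IH (M.erase w) ((Multiset.erase_lt).mpr hw) hM' fun z hz => hre z (Multiset.mem_of_mem_erase hz))
  · -- complex pair
    have hwc : (starRingEnd ℂ) w ∈ M := by
      rw [← hM]
      exact Multiset.mem_map_of_mem _ hw
    have hne : (starRingEnd ℂ) w ≠ w := fun h => him (by
      have := congrArg Complex.im h
      simp [Complex.conj_im] at this
      linarith)
    have hwc' : (starRingEnd ℂ) w ∈ M.erase w := Multiset.mem_erase_of_ne hne |>.mpr hwc
    set M'' := (M.erase w).erase ((starRingEnd ℂ) w) with hM''def
    have herase : M = w ::ₘ (starRingEnd ℂ) w ::ₘ M'' := by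
      rw [hM''def, Multiset.cons_erase hwc', Multiset.cons_erase hw]
    have hM'' : M''.map (starRingEnd ℂ) = M'' := by
      rw [hM''def, Multiset.map_erase _ (RingHom.injective _),
        Multiset.map_erase _ (RingHom.injective _), hM]
      simp only [Complex.conj_conj]
      rw [Multiset.erase_comm]
    have hlt : M'' < M := lt_trans ((Multiset.erase_lt).mpr hwc') ((Multiset.erase_lt).mpr hw)
    rw [herase, Multiset.map_cons, Multiset.map_cons, Multiset.prod_cons, Multiset.prod_cons,
      ← mul_assoc]
    exact (polyNN_quad (hre w hw)).mul
      (IH M'' hlt hM'' fun z hz => hre z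
        (Multiset.mem_of_mem_erase (Multiset.mem_of_mem_erase hz)))


def subShearEquiv : (ℝ × ℝ) ≃ (ℝ × ℝ) where
  toFun := fun q => (q.1 - q.2, q.2)
  invFun := fun q => (q.1 + q.2, q.2)
  left_inv := fun q => by simp
  right_inv := fun q => by simp

def subShear : (ℝ × ℝ) ≃ᵐ (ℝ × ℝ) where
  toEquiv := subShearEquiv
  measurable_toFun := (measurable_fst.sub measurable_snd).prodMk measurable_snd
  measurable_invFun := (measurable_fst.add measurable_snd).prodMk measurable_snd

theorem stmt_18 (n : ℕ) (hn : 0 < n) (p : Fin n → ℂ)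
    (hre : ∀ i, (p i).re < 0)
    (hconj : ∃ e : Equiv.Perm (Fin n), ∀ i, p (e i) = (starRingEnd ℂ) (p i))
    (B : Polynomial ℝ) (hdeg : B.natDegree < n)
    (h' : ℝ → ℝ)
    (hlaplace : ∀ s : ℂ, (∀ i, (p i).re < s.re) →
      ∫ t in Set.Ioi (0:ℝ), (h' t : ℂ) * Complex.exp (-s * t)
        = (B.map (algebraMap ℝ ℂ)).eval s / ∏ i, (s - p i))
    (hpos : ∀ t : ℝ, 0 ≤ t → 0 ≤ h' t)
    (σ : ℝ)
    (hσ : σ = Finset.univ.sup' (Finset.univ_nonempty_iff.mpr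
        (Fin.pos_iff_nonempty.mp hn)) (fun i => (p i).re)) :
    ∃ h : ℝ → ℝ,
      (∀ s : ℂ, σ < s.re →
        ∫ t in Set.Ioi (0:ℝ), (h t : ℂ) * Complex.exp (-s * t)
          = (B.map (algebraMap ℝ ℂ)).eval s / (s - (σ : ℂ)) ^ n) ∧
      (∀ t : ℝ, 0 ≤ t → 0 ≤ h t) := by
  classical
  by_cases hB : B = 0
  · refine ⟨0, fun s hs => ?_, fun t ht => le_refl 0⟩
    simp [hB]
  set Bc := B.map (algebraMap ℝ ℂ) with hBcdef
  have hσle : ∀ i, (p i).re ≤ σ := by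
    rw [hσ]; exact fun i => Finset.le_sup' (f := fun j => (p j).re) (Finset.mem_univ i)
  obtain ⟨e, he⟩ := hconj
  set P : Polynomial ℂ := ∏ i, (X + C ((σ:ℂ) - p i)) with hPdef
  -- nonnegativity of coefficients of P
  have hPNN : PolyNN P := by
    have hconjM : (Finset.univ.val.map (fun i => (σ:ℂ) - p i)).map (starRingEnd ℂ)
        = Finset.univ.val.map (fun i => (σ:ℂ) - p i) := by
      rw [Multiset.map_map]
      have h1 : ((starRingEnd ℂ) ∘ fun i => (σ:ℂ) - p i) = fun i => (σ:ℂ) - p (e i) := by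
        funext i
        simp only [Function.comp_apply, map_sub, Complex.conj_ofReal, he i]
      rw [h1]
      have h2 : (fun i => (σ:ℂ) - p (e i)) = (fun i => (σ:ℂ) - p i) ∘ e := rfl
      rw [h2, ← Multiset.map_map]
      congr 1
      exact congrArg Finset.val (Finset.map_univ_equiv e)
    have hreM : ∀ z ∈ Finset.univ.val.map (fun i => (σ:ℂ) - p i), 0 ≤ z.re := by
      intro z hz
      obtain ⟨i, _, rfl⟩ := Multiset.mem_map.mp hz
      simp only [Complex.sub_re, Complex.ofReal_re, sub_nonneg]
      exact hσle i
    have := polyNN_of_conj_multiset _ hconjM hreM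
    rw [Multiset.map_map] at this
    rw [hPdef, Finset.prod_eq_multiset_prod]
    exact this
  set E : ℕ → ℝ := fun k => (P.coeff k).re with hEdef
  have hEnn : ∀ k, 0 ≤ E k := fun k => (hPNN k).2
  have hEc : ∀ k, P.coeff k = ((E k : ℝ) : ℂ) := by
    intro k
    apply Complex.ext
    · simp [hEdef]
    · simp [hEdef, (hPNN k).1]
  have hPmonic : P.Monic := monic_prod_of_monic _ _ (fun i _ => monic_X_add_C _)
  have hPdeg : P.natDegree = n := by
    rw [hPdef, natDegree_prod _ _ (fun i _ => (monic_X_add_C _).ne_zero)]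
    simp only [natDegree_X_add_C, Finset.sum_const, Finset.card_univ, smul_eq_mul, mul_one,
      Fintype.card_fin]
  have hPn : P.coeff n = 1 := by
    have := hPmonic.coeff_natDegree
    rwa [hPdeg] at this
  have hPeval : ∀ s : ℂ, P.eval (s - (σ:ℂ)) = ∏ i, (s - p i) := by
    intro s
    rw [hPdef, eval_prod]
    refine Finset.prod_congr rfl fun i _ => ?_
    simp only [eval_add, eval_X, eval_C]
    ring
  -- expansion of P.eval
  have hPexp : ∀ z : ℂ, P.eval z = z^n + ∑ k ∈ Finset.range n, (E k : ℂ) * z^k := by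
    intro z
    rw [Polynomial.eval_eq_sum_range, hPdeg, Finset.sum_range_succ, hPn, one_mul, add_comm]
    congr 1
    exact Finset.sum_congr rfl fun k _ => by rw [hEc k]
  -- the kernel
  set K : ℝ → ℝ := fun u => ∑ k ∈ Finset.range n,
      E k * (u^(n-1-k) / (Nat.factorial (n-1-k))) * Real.exp (σ*u) with hKdef
  have hKnn : ∀ u : ℝ, 0 ≤ u → 0 ≤ K u := by
    intro u hu
    apply Finset.sum_nonneg
    intro k _
    have h1 : (0:ℝ) ≤ u^(n-1-k) / (Nat.factorial (n-1-k)) := by positivity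
    exact mul_nonneg (mul_nonneg (hEnn k) h1) (Real.exp_pos _).le
  set c : ℝ → ℝ := fun t => ∫ τ in Set.Ioo (0:ℝ) t, K (t-τ) * h' τ with hcdef
  have hcnn : ∀ t : ℝ, 0 ≤ t → 0 ≤ c t := by
    intro t ht
    apply MeasureTheory.setIntegral_nonneg measurableSet_Ioo
    intro τ hτ
    exact mul_nonneg (hKnn _ (by linarith [hτ.2])) (hpos τ hτ.1.le)
  refine ⟨fun t => h' t + c t, ?_, fun t ht => add_nonneg (hpos t ht) (hcnn t ht)⟩
  intro s hs
  set z : ℂ := s - (σ:ℂ) with hzdef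
  have hz : 0 < z.re := by simp [hzdef, Complex.sub_re, hs]
  have hz0 : z ≠ 0 := fun h => by simp [h] at hz
  have hsre : ∀ i, (p i).re < s.re := fun i => lt_of_le_of_lt (hσle i) hs
  have hprod_ne : (∏ i, (s - p i)) ≠ 0 := by
    apply Finset.prod_ne_zero_iff.mpr
    intro i _
    intro hcon
    have : (s - p i).re = 0 := by rw [hcon]; simp
    simp only [Complex.sub_re] at this
    have := hsre i
    linarith
  -- integrability of h'
  have hBc : Bc ≠ 0 := fun hc => hB (by
    have : Function.Injective (algebraMap ℝ ℂ) := (algebraMap ℝ ℂ).injective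
    exact Polynomial.map_eq_zero_iff this |>.mp hc)
  have hint' : MeasureTheory.IntegrableOn (fun t : ℝ => (h' t : ℂ) * Complex.exp (-s * t))
      (Set.Ioi 0) := by
    have hroots : {x : ℂ | Bc.IsRoot x}.Finite := Polynomial.finite_setOf_isRoot hBc
    have himg : ((fun x : ℝ => (x:ℂ)) '' Set.Ioo σ s.re).Infinite :=
      (Set.Ioo_infinite hs).image (fun a _ b _ hab => Complex.ofReal_inj.mp hab)
    have hex : ∃ x0 : ℝ, x0 ∈ Set.Ioo σ s.re ∧ ¬ Bc.IsRoot ((x0:ℝ):ℂ) := by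
      by_contra hcon
      push_neg at hcon
      have hsub : ((fun x : ℝ => (x:ℂ)) '' Set.Ioo σ s.re) ⊆ {x : ℂ | Bc.IsRoot x} := by
        rintro _ ⟨x0, hx0, rfl⟩
        exact hcon x0 hx0
      exact himg (hroots.subset hsub)
    obtain ⟨x0, hx0mem, hx0⟩ := hex
    have hx0σ : σ < x0 := hx0mem.1
    have hx0s : x0 < s.re := hx0mem.2
    have hint0 : MeasureTheory.IntegrableOn
        (fun t : ℝ => (h' t : ℂ) * Complex.exp (-(x0:ℂ) * t)) (Set.Ioi 0) := by
      by_contra hni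
      have hl := hlaplace (x0:ℂ) (fun i => by
        rw [Complex.ofReal_re]; exact lt_of_le_of_lt (hσle i) hx0σ)
      rw [MeasureTheory.integral_undef hni] at hl
      have hden : (∏ i, ((x0:ℂ) - p i)) ≠ 0 := by
        apply Finset.prod_ne_zero_iff.mpr
        intro i _ hcon
        have : ((x0:ℂ) - p i).re = 0 := by rw [hcon]; simp
        simp only [Complex.sub_re, Complex.ofReal_re] at this
        have := hσle i
        linarith
      exact (div_ne_zero hx0 hden) hl.symm
    have hasm0 := hint0.aestronglyMeasurable
    have hasm : MeasureTheory.AEStronglyMeasurable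
        (fun t : ℝ => (h' t : ℂ) * Complex.exp (-s * t))
        (MeasureTheory.volume.restrict (Set.Ioi 0)) := by
      have heq : (fun t : ℝ => (h' t : ℂ) * Complex.exp (-s * t))
          = fun t : ℝ => ((h' t : ℂ) * Complex.exp (-(x0:ℂ) * t))
              * Complex.exp (((x0:ℂ) - s) * t) := by
        funext t
        rw [mul_assoc, ← Complex.exp_add]
        ring_nf
      rw [heq]
      exact hasm0.mul (Continuous.aestronglyMeasurable
        (Complex.continuous_exp.comp (continuous_const.mul Complex.continuous_ofReal)))
    apply MeasureTheory.Integrable.mono hint0 hasm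
    filter_upwards [MeasureTheory.ae_restrict_mem measurableSet_Ioi] with t ht
    rw [norm_mul, norm_mul]
    apply mul_le_mul_of_nonneg_left _ (norm_nonneg _)
    rw [Complex.norm_exp, Complex.norm_exp]
    apply Real.exp_le_exp.mpr
    simp only [Complex.neg_re, Complex.mul_re, Complex.ofReal_re, Complex.ofReal_im,
      Complex.neg_im]
    nlinarith [le_of_lt (Set.mem_Ioi.mp ht), le_of_lt hx0s]
  -- Laplace transform of the kernel
  have hexpz : ∀ u : ℝ, Complex.exp ((σ:ℂ)*u) * Complex.exp (-s*u) = Complex.exp (-(z*u)) := by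
    intro u
    rw [← Complex.exp_add]
    congr 1
    rw [hzdef]
    ring
  have hKpt : ∀ u : ℝ, (K u : ℂ) * Complex.exp (-s * u)
      = ∑ k ∈ Finset.range n, ((E k : ℂ) / (Nat.factorial (n-1-k) : ℂ))
          * ((u:ℂ)^(n-1-k) * Complex.exp (-(z * u))) := by
    intro u
    rw [hKdef]
    push_cast [Complex.ofReal_exp]
    rw [Finset.sum_mul]
    refine Finset.sum_congr rfl fun k _ => ?_
    rw [mul_assoc, hexpz u]
    ring
  have hKint : MeasureTheory.IntegrableOn
      (fun u : ℝ => (K u : ℂ) * Complex.exp (-s * u)) (Set.Ioi 0) := by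
    apply MeasureTheory.Integrable.congr
      (MeasureTheory.integrable_finset_sum (μ := MeasureTheory.volume.restrict (Set.Ioi 0))
        (Finset.range n)
        (fun k _ => ((lap_integrableOn (n-1-k) hz).const_mul ((E k : ℂ) / (Nat.factorial (n-1-k) : ℂ)))))
    filter_upwards with u
    exact (hKpt u).symm
  have hKval : ∫ u in Set.Ioi (0:ℝ), (K u : ℂ) * Complex.exp (-s * u)
      = ∑ k ∈ Finset.range n, (E k : ℂ) / z^(n-k) := by
    rw [MeasureTheory.integral_congr_ae (Filter.Eventually.of_forall hKpt)]
    rw [MeasureTheory.integral_finset_sum _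
      (fun k _ => ((lap_integrableOn (n-1-k) hz).const_mul _))]
    refine Finset.sum_congr rfl fun k hk => ?_
    have hk' : k < n := Finset.mem_range.mp hk
    rw [MeasureTheory.integral_const_mul, lap_value (n-1-k) hz]
    have hmk : n-1-k+1 = n-k := by omega
    rw [hmk]
    have hfne : ((Nat.factorial (n-1-k) : ℂ)) ≠ 0 := by
      exact_mod_cast Nat.cast_ne_zero.mpr (Nat.factorial_ne_zero _)
    field_simp
  -- Fubini setup
  set Kt : ℝ → ℂ := Set.indicator (Set.Ioi 0) (fun u => (K u : ℂ) * Complex.exp (-s * u))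
    with hKtdef
  set ft : ℝ → ℂ := Set.indicator (Set.Ioi 0) (fun τ => (h' τ : ℂ) * Complex.exp (-s * τ))
    with hftdef
  have hKti : MeasureTheory.Integrable Kt :=
    (MeasureTheory.integrable_indicator_iff measurableSet_Ioi).mpr hKint
  have hfti : MeasureTheory.Integrable ft :=
    (MeasureTheory.integrable_indicator_iff measurableSet_Ioi).mpr hint'
  have hPhi : MeasureTheory.Integrable (fun q : ℝ × ℝ => Kt q.1 * ft q.2)
      (MeasureTheory.volume.prod MeasureTheory.volume) := hKti.mul_prod hfti
  have hpsi : MeasureTheory.MeasurePreserving (fun q : ℝ × ℝ => (q.1 - q.2, q.2))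
      (MeasureTheory.volume.prod MeasureTheory.volume)
      (MeasureTheory.volume.prod MeasureTheory.volume) :=
    MeasureTheory.measurePreserving_sub_prod _ _
  have hGint : MeasureTheory.Integrable (fun q : ℝ × ℝ => Kt (q.1 - q.2) * ft q.2)
      (MeasureTheory.volume.prod MeasureTheory.volume) :=
    (hpsi.integrable_comp hPhi.aestronglyMeasurable).mpr hPhi
  have hGval : ∫ q : ℝ × ℝ, Kt (q.1 - q.2) * ft q.2
        ∂(MeasureTheory.volume.prod MeasureTheory.volume)
      = (∫ u : ℝ, Kt u) * ∫ τ : ℝ, ft τ := by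
    have hemb : MeasurableEmbedding (fun q : ℝ × ℝ => (q.1 - q.2, q.2)) :=
      subShear.measurableEmbedding
    have h1 := hpsi.integral_comp hemb (fun q : ℝ × ℝ => Kt q.1 * ft q.2)
    rw [← MeasureTheory.integral_prod_mul]
    exact h1
  have hinner : ∀ t : ℝ, (∫ τ : ℝ, Kt (t - τ) * ft τ) = (c t : ℂ) * Complex.exp (-s * t) := by
    intro t
    have hptw : (fun τ : ℝ => Kt (t - τ) * ft τ)
        = Set.indicator (Set.Ioo 0 t)
            (fun τ => ((K (t-τ) * h' τ : ℝ) : ℂ) * Complex.exp (-s * t)) := by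
      funext τ
      by_cases h1 : τ ∈ Set.Ioo 0 t
      · rw [Set.indicator_of_mem h1, hKtdef, hftdef,
          Set.indicator_of_mem (Set.mem_Ioi.mpr (by linarith [h1.1, h1.2] : (0:ℝ) < t - τ)),
          Set.indicator_of_mem (Set.mem_Ioi.mpr h1.1)]
        push_cast
        rw [show (-s * (t - τ) : ℂ) = (-s*t) + (s * τ) by ring, Complex.exp_add,
          show (-s * τ : ℂ) = -(s*τ) by ring, Complex.exp_neg]
        have : Complex.exp (s * (τ:ℂ)) ≠ 0 := Complex.exp_ne_zero _
        field_simp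
      · rw [Set.indicator_of_notMem h1]
        simp only [Set.mem_Ioo, not_and, not_lt] at h1
        by_cases hτ : 0 < τ
        · have : Kt (t - τ) = 0 := Set.indicator_of_notMem
            (by simp only [Set.mem_Ioi, not_lt]; linarith [h1 hτ]) _
          rw [this, zero_mul]
        · have : ft τ = 0 := Set.indicator_of_notMem
            (by simpa using hτ) _
          rw [this, mul_zero]
    rw [hptw, MeasureTheory.integral_indicator measurableSet_Ioo,
      MeasureTheory.integral_mul_const]
    congr 1
    exact integral_ofReal
  have hcint : MeasureTheory.IntegrableOn
      (fun t : ℝ => (c t : ℂ) * Complex.exp (-s * t)) (Set.Ioi 0) := by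
    have h1 := hGint.integral_prod_left
    have h2 : (fun t : ℝ => ∫ τ : ℝ, Kt (t - τ) * ft τ)
        = fun t : ℝ => (c t : ℂ) * Complex.exp (-s * t) := funext hinner
    rw [h2] at h1
    exact h1.integrableOn
  have hczero : ∀ t : ℝ, t ∉ Set.Ioi (0:ℝ) → (c t : ℂ) * Complex.exp (-s * t) = 0 := by
    intro t ht
    have : c t = 0 := by
      show (∫ τ in Set.Ioo (0:ℝ) t, K (t - τ) * h' τ) = 0
      rw [Set.Ioo_eq_empty (by simpa using ht)]
      simp
    rw [this]
    simp
  have houter : ∫ t in Set.Ioi (0:ℝ), (c t : ℂ) * Complex.exp (-s * t)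
      = (∑ k ∈ Finset.range n, (E k:ℂ)/z^(n-k)) * (Bc.eval s / ∏ i, (s - p i)) := by
    have h1 := MeasureTheory.integral_prod _ hGint
    rw [hGval] at h1
    have h2 : ∫ t : ℝ, (c t : ℂ) * Complex.exp (-s * t)
        = (∫ u : ℝ, Kt u) * ∫ τ : ℝ, ft τ := by
      rw [h1]
      exact (MeasureTheory.integral_congr_ae (Filter.Eventually.of_forall hinner)).symm
    have h3 : ∫ t in Set.Ioi (0:ℝ), (c t : ℂ) * Complex.exp (-s * t)
        = ∫ t : ℝ, (c t : ℂ) * Complex.exp (-s * t) := by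
      rw [← MeasureTheory.integral_indicator measurableSet_Ioi]
      congr 1
      funext t
      by_cases ht : t ∈ Set.Ioi (0:ℝ)
      · rw [Set.indicator_of_mem ht]
      · rw [Set.indicator_of_notMem ht, hczero t ht]
    rw [h3, h2, hKtdef, hftdef, MeasureTheory.integral_indicator measurableSet_Ioi,
      MeasureTheory.integral_indicator measurableSet_Ioi, hKval, hlaplace s hsre]
  -- final computation
  have hsplit : ∫ t in Set.Ioi (0:ℝ), ((h' t + c t : ℝ) : ℂ) * Complex.exp (-s * t)
      = (∫ t in Set.Ioi (0:ℝ), (h' t:ℂ) * Complex.exp (-s*t))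
        + ∫ t in Set.Ioi (0:ℝ), (c t:ℂ) * Complex.exp (-s*t) := by
    rw [← MeasureTheory.integral_add hint' hcint]
    congr 1
    funext t
    push_cast
    ring
  rw [hsplit, hlaplace s hsre, houter]
  have hzn : z^n ≠ 0 := pow_ne_zero _ hz0
  have hsum_eq : (1 + ∑ k ∈ Finset.range n, (E k:ℂ)/z^(n-k)) * z^n = ∏ i, (s - p i) := by
    rw [← hPeval s, ← hzdef, hPexp]
    rw [add_mul, one_mul, Finset.sum_mul]
    congr 1
    refine Finset.sum_congr rfl fun k hk => ?_
    have hk' : k < n := Finset.mem_range.mp hk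
    have hznk : z^(n-k) ≠ 0 := pow_ne_zero _ hz0
    rw [show z^n = z^(n-k) * z^k by rw [← pow_add]; congr 1; omega]
    field_simp
  have h2 : (1 + ∑ k ∈ Finset.range n, (E k:ℂ)/z^(n-k)) = (∏ i, (s - p i)) / z^n := by
    rw [eq_div_iff hzn]
    exact hsum_eq
  calc Bc.eval s / (∏ i, (s - p i))
        + (∑ k ∈ Finset.range n, (E k:ℂ)/z^(n-k)) * (Bc.eval s / ∏ i, (s - p i))
      = (Bc.eval s / (∏ i, (s - p i))) * (1 + ∑ k ∈ Finset.range n, (E k:ℂ)/z^(n-k)) := by ring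
    _ = (Bc.eval s / (∏ i, (s - p i))) * ((∏ i, (s - p i)) / z^n) := by rw [h2]
    _ = Bc.eval s / z^n := by
        rw [div_mul_div_comm, mul_comm (Bc.eval s) _, mul_div_mul_left _ _ hprod_ne]
end
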